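/- Let ω ∈ (0,1), let κ > 1, and let (a_j)_{j≥1}, (b_j)_{j≥1} be sequences of reals with a_j ≥ a_* > 0 and b_j ≥ b_* > 0 for all j. For s ≥ 1 and ε ∈ (0,1) let N(ε,s) := #{h ∈ ℤ^s : ω_h > ε²} (a finite number, at least 1). Then for every θ > 0 there exists T > 0 such that for all s ≥ 1 and ε ∈ (0,1) with s + log ε^{−1} ≥ T, one has log N(ε,s) ≤ θ · (s + (log ε^{−1})^{κ}). -/

import Mathlib

open Filter Real Finset

lemma aux_L1 (θ c₁ D e κ : ℝ) (hθ : 0 < θ) (hκ : 1 < κ) :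
    ∃ L₁ : ℝ, 1 ≤ L₁ ∧ ∀ L, L₁ ≤ L →
      c₁ * L * (D + e * Real.log (1 + L)) ≤ θ / 2 * L ^ κ := by
  have hκ' : (0:ℝ) < κ - 1 := by linarith
  have h1 : Tendsto (fun L : ℝ => c₁ * D * L ^ (1 - κ)) atTop (nhds 0) := by
    have := (tendsto_rpow_neg_atTop hκ').const_mul (c₁ * D)
    simpa [show -(κ-1) = 1 - κ by ring] using this
  have h2 : Tendsto (fun L : ℝ => Real.log L * L ^ (1 - κ)) atTop (nhds 0) := by
    have := (isLittleO_log_rpow_atTop hκ').tendsto_div_nhds_zero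
    refine this.congr' ?_
    filter_upwards [eventually_gt_atTop (0:ℝ)] with L hL
    rw [div_eq_mul_inv, ← Real.rpow_neg hL.le]
    ring_nf
  have h3 : Tendsto (fun L : ℝ => Real.log (1 + L) * L ^ (1 - κ)) atTop (nhds 0) := by
    have hup : Tendsto (fun L : ℝ => Real.log 2 * L ^ (1 - κ) + Real.log L * L ^ (1 - κ))
        atTop (nhds 0) := by
      have h0 : Tendsto (fun L : ℝ => Real.log 2 * L ^ (1 - κ)) atTop (nhds 0) := by
        have := (tendsto_rpow_neg_atTop hκ').const_mul (Real.log 2)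
        simpa [show -(κ-1) = 1 - κ by ring] using this
      simpa using h0.add h2
    refine tendsto_of_tendsto_of_tendsto_of_le_of_le' tendsto_const_nhds hup ?_ ?_
    · filter_upwards [eventually_ge_atTop (1:ℝ)] with L hL
      have : (0:ℝ) ≤ Real.log (1 + L) := Real.log_nonneg (by linarith)
      positivity
    · filter_upwards [eventually_ge_atTop (1:ℝ)] with L hL
      have hlog : Real.log (1 + L) ≤ Real.log 2 + Real.log L := by
        rw [← Real.log_mul (by norm_num) (by linarith)]
        exact Real.log_le_log (by linarith) (by linarith)
      have hp : (0:ℝ) ≤ L ^ (1 - κ) := Real.rpow_nonneg (by linarith) _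
      calc Real.log (1 + L) * L ^ (1 - κ) ≤ (Real.log 2 + Real.log L) * L ^ (1 - κ) :=
            mul_le_mul_of_nonneg_right hlog hp
        _ = Real.log 2 * L ^ (1 - κ) + Real.log L * L ^ (1 - κ) := by ring
  have h4 : Tendsto (fun L : ℝ => c₁ * D * L ^ (1 - κ)
      + c₁ * e * (Real.log (1 + L) * L ^ (1 - κ))) atTop (nhds 0) := by
    simpa using h1.add (h3.const_mul (c₁ * e))
  have h5 : ∀ᶠ L : ℝ in atTop,
      c₁ * L * (D + e * Real.log (1 + L)) ≤ θ / 2 * L ^ κ := by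
    have hev := h4.eventually (eventually_le_nhds (by linarith : (0:ℝ) < θ / 2))
    filter_upwards [hev, eventually_ge_atTop (1:ℝ)] with L hfl hL1
    have hL0 : (0:ℝ) < L := by linarith
    have hpow : (0:ℝ) < L ^ κ := Real.rpow_pos_of_pos hL0 _
    have key : c₁ * L * (D + e * Real.log (1 + L))
        = (c₁ * D * L ^ (1 - κ) + c₁ * e * (Real.log (1 + L) * L ^ (1 - κ))) * L ^ κ := by
      have : L ^ (1 - κ) * L ^ κ = L := by
        rw [← Real.rpow_add hL0]; simp
      have h' : (c₁ * D * L ^ (1 - κ) + c₁ * e * (Real.log (1 + L) * L ^ (1 - κ))) * L ^ κ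
          = c₁ * D * (L ^ (1 - κ) * L ^ κ) + c₁ * e * Real.log (1 + L) * (L ^ (1 - κ) * L ^ κ) := by
        ring
      rw [h', this]; ring
    rw [key]
    exact mul_le_mul_of_nonneg_right hfl hpow.le
  obtain ⟨L₀, hL₀⟩ := eventually_atTop.mp h5
  exact ⟨max L₀ 1, le_max_right _ _, fun L hL => hL₀ L (le_trans (le_max_left _ _) hL)⟩

lemma aux_sum_weight (n : ℕ) (t : ℝ) :
    ∑ x ∈ Finset.Icc (-(n:ℤ)) (n:ℤ), (if x = 0 then t else 1) = t + 2*n := by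
  have h0 : (0:ℤ) ∈ Finset.Icc (-(n:ℤ)) (n:ℤ) := by
    simp [Finset.mem_Icc]
  rw [← Finset.add_sum_erase _ _ h0]
  simp only [if_pos rfl]
  have hcard : ((Finset.Icc (-(n:ℤ)) (n:ℤ)).erase 0).card = 2*n := by
    rw [Finset.card_erase_of_mem h0, Int.card_Icc]
    have : ((n:ℤ) + 1 - -(n:ℤ)) = (2*n+1 : ℕ) := by push_cast; ring
    rw [this, Int.toNat_natCast]
    omega
  have hsum : ∑ x ∈ (Finset.Icc (-(n:ℤ)) (n:ℤ)).erase 0, (if x = 0 then t else 1)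
      = ((Finset.Icc (-(n:ℤ)) (n:ℤ)).erase 0).card * 1 := by
    rw [Finset.sum_congr rfl (fun x hx => if_neg (Finset.ne_of_mem_erase hx)),
      Finset.sum_const, nsmul_eq_mul]
  rw [hsum, hcard]
  push_cast; ring

set_option maxHeartbeats 1000000 in
/-- κ-EC-weak tractability (κ > 1) of L₂-approximation for Λ^all,
expressed via the eigenvalue-counting function N(ε,s) = #{h ∈ ℤ^s : ω_h > ε²}:
for every θ > 0 there is T > 0 such that log N(ε,s) ≤ θ(s + (log ε⁻¹)^κ)
whenever s ≥ 1, ε ∈ (0,1) and s + log ε⁻¹ ≥ T. -/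
theorem stmt8 (ω : ℝ) (hω : ω ∈ Set.Ioo (0:ℝ) 1) (κ : ℝ) (hκ : 1 < κ)
    (a b : ℕ → ℝ) (aStar bStar : ℝ) (haStar : 0 < aStar) (hbStar : 0 < bStar)
    (ha : ∀ j, aStar ≤ a j) (hb : ∀ j, bStar ≤ b j) :
    ∀ θ : ℝ, 0 < θ → ∃ T : ℝ, 0 < T ∧
      ∀ s : ℕ, 1 ≤ s → ∀ ε : ℝ, ε ∈ Set.Ioo (0:ℝ) 1 →
        T ≤ (s : ℝ) + Real.log ε⁻¹ →
        Real.log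
            (({h : Fin s → ℤ |
                ε ^ 2 < ω ^ (∑ j : Fin s, a j * |(h j : ℝ)| ^ (b j))}.ncard : ℝ)) ≤
          θ * ((s : ℝ) + (Real.log ε⁻¹) ^ κ) := by
  obtain ⟨hω0, hω1⟩ := hω
  intro θ hθ
  have hlw : 0 < Real.log ω⁻¹ := Real.log_pos (one_lt_inv_iff₀.mpr ⟨hω0, hω1⟩)
  set lw := Real.log ω⁻¹ with hlwdef
  set c₁ := 2 / lw / aStar with hc₁def
  have hc₁ : 0 < c₁ := by positivity
  set e := 1 / bStar with hedef
  have he : 0 < e := by positivity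
  set D := Real.log (1 + 4/θ + 4/θ * c₁ ^ (1/bStar)) with hDdef
  have hD : 0 ≤ D := by
    apply Real.log_nonneg
    have h1 : (0:ℝ) ≤ 4/θ := by positivity
    have h2 : (0:ℝ) ≤ 4/θ * c₁ ^ (1/bStar) := by positivity
    linarith
  obtain ⟨L₁, hL₁1, hL₁⟩ := aux_L1 θ c₁ D e κ hθ hκ
  set ψ := c₁ * L₁ * (D + e * Real.log (1 + L₁)) with hψdef
  have hψ0 : 0 ≤ ψ := by
    have : (0:ℝ) ≤ Real.log (1 + L₁) := Real.log_nonneg (by linarith)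
    have h2 : (0:ℝ) ≤ D + e * Real.log (1 + L₁) := by positivity
    positivity
  have hTpos : 0 < L₁ + 2/θ * ψ + 1 := by
    have : (0:ℝ) ≤ 2/θ * ψ := by positivity
    linarith
  refine ⟨L₁ + 2/θ * ψ + 1, hTpos, ?_⟩
  intro s hs ε hε hT
  obtain ⟨hε0, hε1⟩ := hε
  have hL : 0 < Real.log ε⁻¹ := Real.log_pos (one_lt_inv_iff₀.mpr ⟨hε0, hε1⟩)
  set L := Real.log ε⁻¹ with hLdef
  set S := {h : Fin s → ℤ | ε ^ 2 < ω ^ (∑ j : Fin s, a j * |(h j : ℝ)| ^ (b j))} with hSdef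
  -- main bound
  have hMain : Real.log ((S.ncard : ℝ)) ≤ θ/2 * s + c₁ * L * (D + e * Real.log (1 + L)) := by
    have hbpos : ∀ j : ℕ, 0 < b j := fun j => lt_of_lt_of_le hbStar (hb j)
    have hapos : ∀ j : ℕ, 0 < a j := fun j => lt_of_lt_of_le haStar (ha j)
    have hFnonneg : ∀ h : Fin s → ℤ, 0 ≤ ∑ j : Fin s, a j * |(h j : ℝ)| ^ (b j) :=
      fun h => Finset.sum_nonneg fun j _ =>
        mul_nonneg (hapos _).le (Real.rpow_nonneg (abs_nonneg _) _)
    set M := 2 / lw * L with hMdef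
    have hM0 : 0 < M := by positivity
    have hMA : M / aStar = c₁ * L := by rw [hMdef, hc₁def]; ring
    have hstep1 : ∀ h : Fin s → ℤ, h ∈ S → (∑ j : Fin s, a j * |(h j : ℝ)| ^ (b j)) < M := by
      intro h hh
      have hh' : ε ^ 2 < ω ^ (∑ j : Fin s, a j * |(h j : ℝ)| ^ (b j)) := hh
      have hlog := Real.log_lt_log (by positivity) hh'
      rw [Real.log_pow, Real.log_rpow hω0] at hlog
      have hlε : Real.log ε = -L := by rw [hLdef, Real.log_inv]; ring
      have hlω : Real.log ω = -lw := by rw [hlwdef, Real.log_inv]; ring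
      rw [hlε, hlω] at hlog
      push_cast at hlog
      have h2 : (∑ j : Fin s, a j * |(h j : ℝ)| ^ (b j)) < 2 * L / lw :=
        (lt_div_iff₀ hlw).mpr (by nlinarith)
      have h3 : 2 * L / lw = M := by rw [hMdef]; ring
      linarith
    set K := (M / aStar) ^ (1/bStar) with hKdef
    have hK0 : 0 < K := Real.rpow_pos_of_pos (by positivity) _
    set n := ⌈K⌉₊ with hndef
    set t := 1 + 4*n/θ with htdef
    have ht1 : (1:ℝ) ≤ t := by
      have h40 : (0:ℝ) ≤ 4*n/θ := by positivity
      rw [htdef]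
      linarith
    have ht0 : (0:ℝ) < t := by linarith
    set box : Finset (Fin s → ℤ) := Fintype.piFinset (fun _ => Finset.Icc (-(n:ℤ)) (n:ℤ))
      with hboxdef
    have hsub : ∀ h : Fin s → ℤ, h ∈ S → h ∈ box := by
      intro h hh
      have hFh := hstep1 h hh
      rw [hboxdef, Fintype.mem_piFinset]
      intro j
      rw [Finset.mem_Icc]
      suffices hj : |h j| ≤ (n:ℤ) by exact abs_le.mp hj
      by_cases hz : h j = 0
      · rw [hz]; simp
      · have h1 : (1:ℝ) ≤ |(h j : ℝ)| := by
          have : (1:ℤ) ≤ |h j| := Int.one_le_abs (by omega)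
          exact_mod_cast this
        have hterm : a j * |(h j : ℝ)| ^ (b j) ≤ ∑ i : Fin s, a i * |(h i : ℝ)| ^ (b i) :=
          Finset.single_le_sum (f := fun i : Fin s => a i * |(h i : ℝ)| ^ (b i))
            (fun i _ => mul_nonneg (hapos _).le (Real.rpow_nonneg (abs_nonneg _) _))
            (Finset.mem_univ j)
        have hbb : |(h j : ℝ)| ^ bStar ≤ |(h j : ℝ)| ^ (b j) :=
          Real.rpow_le_rpow_of_exponent_le h1 (hb j)
        have haa : aStar * |(h j : ℝ)| ^ bStar ≤ a j * |(h j : ℝ)| ^ (b j) :=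
          mul_le_mul (ha j) hbb (Real.rpow_nonneg (abs_nonneg _) _) (hapos j).le
        have hlt : |(h j : ℝ)| ^ bStar < M / aStar :=
          (lt_div_iff₀' haStar).mpr (by linarith)
        have hxK : |(h j : ℝ)| < K := by
          have h2 := Real.rpow_lt_rpow (Real.rpow_nonneg (abs_nonneg _) _) hlt
            (by positivity : (0:ℝ) < 1/bStar)
          rw [← Real.rpow_mul (abs_nonneg _), mul_one_div_cancel hbStar.ne',
            Real.rpow_one] at h2
          rw [hKdef]
          exact h2
        have hxn : |(h j : ℝ)| ≤ (n:ℝ) := le_trans hxK.le (Nat.le_ceil K)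
        exact_mod_cast hxn
    set SF := box.filter (fun h => ε ^ 2 < ω ^ (∑ j : Fin s, a j * |(h j : ℝ)| ^ (b j)))
      with hSFdef
    have hSeq : S = ↑SF := by
      ext h
      rw [hSFdef, Finset.coe_filter]
      constructor
      · intro hh; exact ⟨hsub h hh, hh⟩
      · intro hh; exact hh.2
    have hNcard : S.ncard = SF.card := by rw [hSeq, Set.ncard_coe_finset]
    have h0mem : (fun _ => 0 : Fin s → ℤ) ∈ SF := by
      rw [hSFdef, Finset.mem_filter]
      constructor
      · rw [hboxdef, Fintype.mem_piFinset]
        intro j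
        rw [Finset.mem_Icc]
        constructor <;> simp
      · have hz : (∑ j : Fin s, a j * |((0:ℤ) : ℝ)| ^ (b j)) = 0 := by
          apply Finset.sum_eq_zero
          intro j _
          rw [Int.cast_zero, abs_zero, Real.zero_rpow (hbpos j).ne', mul_zero]
        rw [hz, Real.rpow_zero]
        calc ε ^ 2 < 1 ^ 2 := by
              apply pow_lt_pow_left₀ hε1 hε0.le
              norm_num
          _ = 1 := one_pow 2
    have hcardpos : 0 < SF.card := Finset.card_pos.mpr ⟨_, h0mem⟩
    have hsparse : ∀ h ∈ SF, ((Finset.univ.filter fun j => ¬(h j = 0)).card : ℝ) ≤ c₁ * L := by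
      intro h hh
      have hhS : h ∈ S := by rw [hSeq]; exact hh
      have hFh := hstep1 h hhS
      have hlow : ((Finset.univ.filter fun j => ¬(h j = 0)).card : ℝ) * aStar
          ≤ ∑ j : Fin s, a j * |(h j : ℝ)| ^ (b j) := by
        have hle1 : ∀ j ∈ Finset.univ.filter (fun j : Fin s => ¬(h j = 0)),
            aStar ≤ a j * |(h j : ℝ)| ^ (b j) := by
          intro j hj
          have hz : ¬(h j = 0) := (Finset.mem_filter.mp hj).2
          have h1 : (1:ℝ) ≤ |(h j : ℝ)| := by
            have : (1:ℤ) ≤ |h j| := Int.one_le_abs (by omega)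
            exact_mod_cast this
          have h2 : (1:ℝ) ≤ |(h j : ℝ)| ^ (b j) := Real.one_le_rpow h1 (hbpos j).le
          calc aStar = aStar * 1 := (mul_one _).symm
            _ ≤ a j * |(h j : ℝ)| ^ (b j) := mul_le_mul (ha j) h2 zero_le_one (hapos j).le
        calc ((Finset.univ.filter fun j => ¬(h j = 0)).card : ℝ) * aStar
            = ∑ _j ∈ Finset.univ.filter (fun j : Fin s => ¬(h j = 0)), aStar := by
              rw [Finset.sum_const, nsmul_eq_mul]
          _ ≤ ∑ j ∈ Finset.univ.filter (fun j : Fin s => ¬(h j = 0)),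
                a j * |(h j : ℝ)| ^ (b j) := Finset.sum_le_sum hle1
          _ ≤ ∑ j : Fin s, a j * |(h j : ℝ)| ^ (b j) :=
              Finset.sum_le_sum_of_subset_of_nonneg (Finset.filter_subset _ _)
                (fun j _ _ => mul_nonneg (hapos _).le (Real.rpow_nonneg (abs_nonneg _) _))
      have : ((Finset.univ.filter fun j => ¬(h j = 0)).card : ℝ) ≤ M / aStar :=
        (le_div_iff₀ haStar).mpr (by linarith)
      linarith [hMA ▸ this]
    have hprodlow : ∀ h ∈ SF, t ^ ((s:ℝ) - c₁*L) ≤ ∏ j : Fin s, (if h j = 0 then t else 1) := by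
      intro h hh
      have hprod : ∏ j : Fin s, (if h j = 0 then t else 1)
          = t ^ (Finset.univ.filter fun j => h j = 0).card := by
        rw [Finset.prod_ite (fun _ => t) (fun _ => (1:ℝ)), Finset.prod_const,
          Finset.prod_const, one_pow, mul_one]
      have hcards : (Finset.univ.filter fun j => h j = 0).card
          + (Finset.univ.filter fun j => ¬(h j = 0)).card = s := by
        rw [Finset.card_filter_add_card_filter_not]
        simp
      have hk := hsparse h hh
      have hz : (s:ℝ) - c₁ * L ≤ ((Finset.univ.filter fun j => h j = 0).card : ℝ) := by
        have hc : ((Finset.univ.filter fun j => h j = 0).card : ℝ)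
            + ((Finset.univ.filter fun j => ¬(h j = 0)).card : ℝ) = s := by
          exact_mod_cast hcards
        linarith
      calc t ^ ((s:ℝ) - c₁*L)
          ≤ t ^ (((Finset.univ.filter fun j => h j = 0).card : ℕ) : ℝ) :=
            Real.rpow_le_rpow_of_exponent_le ht1 hz
        _ = t ^ (Finset.univ.filter fun j => h j = 0).card := Real.rpow_natCast _ _
        _ = ∏ j : Fin s, (if h j = 0 then t else 1) := hprod.symm
    have hsum : ∑ h ∈ box, ∏ j : Fin s, (if h j = 0 then t else 1) = (t + 2*n)^s := by
      rw [hboxdef]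
      have hps := Finset.prod_univ_sum (fun _ : Fin s => Finset.Icc (-(n:ℤ)) (n:ℤ))
        (fun _ x => if x = 0 then t else (1:ℝ))
      rw [← hps]
      simp only [aux_sum_weight]
      rw [Finset.prod_const, Finset.card_univ, Fintype.card_fin]
    have hcount : (SF.card : ℝ) * t ^ ((s:ℝ) - c₁*L) ≤ (t + 2*n)^s := by
      calc (SF.card : ℝ) * t ^ ((s:ℝ) - c₁*L)
          = ∑ _h ∈ SF, t ^ ((s:ℝ) - c₁*L) := by rw [Finset.sum_const, nsmul_eq_mul]
        _ ≤ ∑ h ∈ SF, ∏ j : Fin s, (if h j = 0 then t else 1) := Finset.sum_le_sum hprodlow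
        _ ≤ ∑ h ∈ box, ∏ j : Fin s, (if h j = 0 then t else 1) :=
            Finset.sum_le_sum_of_subset_of_nonneg (by rw [hSFdef]; exact Finset.filter_subset _ _)
              (fun h _ _ => Finset.prod_nonneg fun j _ => by
                split_ifs <;> linarith)
        _ = (t + 2*n)^s := hsum
    -- take logs
    have hNpos : (0:ℝ) < (SF.card : ℝ) := by exact_mod_cast hcardpos
    have htpow : (0:ℝ) < t ^ ((s:ℝ) - c₁*L) := Real.rpow_pos_of_pos ht0 _
    have htn : (0:ℝ) < t + 2*n := by positivity
    have hlog1 := Real.log_le_log (by positivity) hcount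
    rw [Real.log_mul hNpos.ne' htpow.ne', Real.log_rpow ht0, Real.log_pow] at hlog1
    have hlogdiff : Real.log (t + 2*n) - Real.log t ≤ θ/2 := by
      rw [← Real.log_div htn.ne' ht0.ne']
      have h1 : Real.log ((t + 2*n)/t) ≤ (t + 2*n)/t - 1 :=
        Real.log_le_sub_one_of_pos (by positivity)
      have h2 : (t + 2*n)/t - 1 = 2*n/t := by field_simp; ring
      have h3 : 2*(n:ℝ)/t ≤ θ/2 := by
        rw [div_le_iff₀ ht0]
        have h4 : θ/2 * t = θ/2 + 2*n := by rw [htdef]; field_simp; ring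
        linarith
      linarith
    have hlogt : Real.log t ≤ D + e * Real.log (1 + L) := by
      have hn' : (n:ℝ) ≤ K + 1 := (Nat.ceil_lt_add_one hK0.le).le
      have hrw : K = c₁ ^ (1/bStar) * L ^ (1/bStar) := by
        rw [hKdef, hMA, Real.mul_rpow hc₁.le hL.le]
      have h1L : (1:ℝ) ≤ (1 + L) ^ (1/bStar) := Real.one_le_rpow (by linarith) (by positivity)
      have hLle : L ^ (1/bStar) ≤ (1 + L) ^ (1/bStar) :=
        Real.rpow_le_rpow hL.le (by linarith) (by positivity)
      have hu1 : (1:ℝ) ≤ 1 + 4/θ + 4/θ * c₁ ^ (1/bStar) := by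
        have h1 : (0:ℝ) ≤ 4/θ := by positivity
        have h2 : (0:ℝ) ≤ 4/θ * c₁ ^ (1/bStar) := by positivity
        linarith
      have htle : t ≤ (1 + 4/θ + 4/θ * c₁ ^ (1/bStar)) * (1 + L) ^ (1/bStar) := by
        have s1 : t ≤ 1 + 4*(K+1)/θ := by
          rw [htdef]
          gcongr
        have p1 : (1 + 4/θ) * 1 ≤ (1 + 4/θ) * (1 + L) ^ (1/bStar) :=
          mul_le_mul_of_nonneg_left h1L (by positivity)
        have p2 : 4/θ * c₁ ^ (1/bStar) * (L ^ (1/bStar))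
            ≤ 4/θ * c₁ ^ (1/bStar) * ((1 + L) ^ (1/bStar)) :=
          mul_le_mul_of_nonneg_left hLle (by positivity)
        have q1 : 1 + 4*(K+1)/θ = (1 + 4/θ) * 1 + 4/θ * c₁ ^ (1/bStar) * (L ^ (1/bStar)) := by
          rw [hrw]; field_simp; ring
        have q2 : (1 + 4/θ + 4/θ * c₁ ^ (1/bStar)) * (1 + L) ^ (1/bStar)
            = (1 + 4/θ) * (1 + L) ^ (1/bStar)
              + 4/θ * c₁ ^ (1/bStar) * ((1 + L) ^ (1/bStar)) := by ring
        linarith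
      have hlogle := Real.log_le_log ht0 htle
      rw [Real.log_mul (by linarith) (by positivity : ((1:ℝ) + L) ^ (1/bStar) ≠ 0),
        Real.log_rpow (by linarith : (0:ℝ) < 1 + L)] at hlogle
      rw [hDdef, hedef]
      linarith
    have hlt0 : 0 ≤ Real.log t := Real.log_nonneg ht1
    rw [hNcard]
    have e2 : (s:ℝ) * (Real.log (t + 2*n) - Real.log t) ≤ (s:ℝ) * (θ/2) :=
      mul_le_mul_of_nonneg_left hlogdiff (by positivity)
    have e3 : c₁*L*Real.log t ≤ c₁*L*(D + e * Real.log (1 + L)) :=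
      mul_le_mul_of_nonneg_left hlogt (by positivity)
    nlinarith [hlog1]
  -- conclude
  have hLκ : (0:ℝ) ≤ L ^ κ := Real.rpow_nonneg hL.le _
  have hs1 : (1:ℝ) ≤ (s:ℝ) := by exact_mod_cast hs
  by_cases hcase : L₁ ≤ L
  · have h1 := hL₁ L hcase
    calc Real.log ((S.ncard : ℝ)) ≤ θ/2 * s + c₁ * L * (D + e * Real.log (1 + L)) := hMain
      _ ≤ θ/2 * s + θ/2 * L ^ κ := by linarith
      _ ≤ θ * ((s:ℝ) + L ^ κ) := by
          have hts : 0 ≤ θ * s := by positivity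
          have htk : 0 ≤ θ * L ^ κ := mul_nonneg hθ.le hLκ
          linarith
  · push_neg at hcase
    have hmono : c₁ * L * (D + e * Real.log (1 + L)) ≤ ψ := by
      rw [hψdef]
      have h1 : c₁ * L ≤ c₁ * L₁ := mul_le_mul_of_nonneg_left hcase.le hc₁.le
      have h2 : D + e * Real.log (1 + L) ≤ D + e * Real.log (1 + L₁) := by
        have h2' := Real.log_le_log (by linarith : (0:ℝ) < 1 + L) (by linarith : 1 + L ≤ 1 + L₁)
        have := mul_le_mul_of_nonneg_left h2' he.le
        linarith
      have h3 : (0:ℝ) ≤ D + e * Real.log (1 + L) := by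
        have : (0:ℝ) ≤ Real.log (1 + L) := Real.log_nonneg (by linarith)
        positivity
      have h4 : (0:ℝ) ≤ c₁ * L := by positivity
      exact mul_le_mul h1 h2 h3 (by positivity)
    have hsbig : 2/θ * ψ + 1 ≤ (s:ℝ) := by
      have : L₁ + 2/θ * ψ + 1 ≤ (s:ℝ) + L := hT
      linarith
    have hψs : ψ ≤ θ/2 * s := by
      have h5 : θ/2 * (2/θ * ψ + 1) ≤ θ/2 * s :=
        mul_le_mul_of_nonneg_left hsbig (by positivity)
      have h6 : θ/2 * (2/θ * ψ + 1) = ψ + θ/2 := by field_simp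
      linarith
    calc Real.log ((S.ncard : ℝ)) ≤ θ/2 * s + c₁ * L * (D + e * Real.log (1 + L)) := hMain
      _ ≤ θ/2 * s + ψ := by linarith
      _ ≤ θ * ((s:ℝ) + L ^ κ) := by
          have htk : 0 ≤ θ * L ^ κ := mul_nonneg hθ.le hLκ
          have hts : θ/2 * s + θ/2 * s = θ * s := by ring
          linarith
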